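/- Let f be a subgraph counting function with parameters p ∈ (0,1), distinct integers m₁,…,m_l ≥ 2 and weights α₁,…,α_l ∈ ℝ. If X, Y ∈ {0,1}^n differ in exactly one coordinate i, then for every j ∈ {1,…,n}, |∂ⱼ f(X) − ∂ⱼ f(Y)| ≤ (1/(2n)) · Σ_{q=1}^l |α_q| m_q (m_q − 1). -/

import Mathlib

open MeasureTheory ProbabilityTheory Real Set

noncomputable section

/-- The real-valued vertex configuration associated to a boolean configuration. -/
def boolToR (n : ℕ) (X : Fin n → Bool) : Fin n → ℝ := fun i => if X i then 1 else 0

/-- The 1-norm on ℝⁿ. -/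
def norm1 (n : ℕ) (x : Fin n → ℝ) : ℝ := ∑ i, |x i|

/-- `C_j^m(X)`: the sum over (m-1)-tuples of pairwise distinct indices, all distinct
from `j`, of the products of the corresponding entries of `X`; `C_j^1 = 1`. -/
def Cvec (n m : ℕ) (X : Fin n → ℝ) (j : Fin n) : ℝ :=
  ∑ g ∈ Finset.univ.filter (fun g : Fin (m - 1) ↪ Fin n => ∀ k, g k ≠ j),
    ∏ k, X (g k)

/-- The subgraph counting function with parameters `p`, `m₁,…,m_l`, `α₁,…,α_l`. -/
def scf (n l : ℕ) (p : ℝ) (m : Fin l → ℕ) (α : Fin l → ℝ) (X : Fin n → ℝ) : ℝ :=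
  (∑ q, (α q / (n : ℝ) ^ (m q - 1)) * ∑ g : Fin (m q) ↪ Fin n, ∏ k, X (g k)) +
    Real.log (p / (1 - p)) * ∑ i, |X i|

/-- The discrete derivative `∂ⱼf(X) = (f(X^{j←1}) - f(X^{j←0}))/2`. -/
def dder (n : ℕ) (f : (Fin n → ℝ) → ℝ) (X : Fin n → ℝ) (j : Fin n) : ℝ :=
  (f (Function.update X j 1) - f (Function.update X j 0)) / 2

/-- The polynomial extension of the discrete gradient of the subgraph counting function:
`∂ⱼf(X) = Σ_q (m_q α_q/(2 n^{m_q-1})) C_j^{m_q}(X) + ½ log(p/(1-p))`. -/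
def gradf (n l : ℕ) (p : ℝ) (m : Fin l → ℕ) (α : Fin l → ℝ) (X : Fin n → ℝ)
    (j : Fin n) : ℝ :=
  (∑ q, ((m q : ℝ) * α q / (2 * (n : ℝ) ^ (m q - 1))) * Cvec n (m q) X j) +
    Real.log (p / (1 - p)) / 2

/-- `C_α = max{2, ½|log(p/(1-p))| + ½ Σ_q |α_q| m_q (m_q - 1)}`. -/
def Calpha (l : ℕ) (p : ℝ) (m : Fin l → ℕ) (α : Fin l → ℝ) : ℝ :=
  max 2 (|Real.log (p / (1 - p))| / 2 + (∑ q, |α q| * (m q : ℝ) * ((m q : ℝ) - 1)) / 2)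

/-- `Φ(X) = (1ₙ + tanh(∇f(X)))/2`, entrywise. -/
def Phi (n l : ℕ) (p : ℝ) (m : Fin l → ℕ) (α : Fin l → ℝ) (X : Fin n → ℝ) :
    Fin n → ℝ :=
  fun j => (1 + Real.tanh (gradf n l p m α X j)) / 2

/-- The set `X_f` of near fixed points of `X ↦ (1ₙ + tanh(∇f(X)))/2` in `[0,1]ⁿ`. -/
def Xf (n l : ℕ) (p : ℝ) (m : Fin l → ℕ) (α : Fin l → ℝ) : Set (Fin n → ℝ) :=
  {X | (∀ i, X i ∈ Set.Icc (0:ℝ) 1) ∧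
    norm1 n (fun j => X j - Phi n l p m α X j) ≤
      5000 * (Calpha l p m α) ^ 2 * (n : ℝ) ^ ((7:ℝ)/8)}

/-- The one-dimensional fixed point function `φ_α`. -/
def phiA (n l : ℕ) (p : ℝ) (m : Fin l → ℕ) (α : Fin l → ℝ) (x : ℝ) : ℝ :=
  (1 + Real.tanh (Real.log (p / (1 - p)) / 2 +
    (∑ q, (m q : ℝ) * α q * (∏ i ∈ Finset.Icc 1 (m q - 1), (1 - (i : ℝ) / n)) *
      x ^ (m q - 1)) / 2)) / 2

/-- if `X, Y ∈ {0,1}ⁿ` differ in exactly one coordinate `i`, then for every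
`j`, `|∂ⱼf(X) - ∂ⱼf(Y)| ≤ (1/(2n)) Σ_q |α_q| m_q (m_q - 1)`. -/

-- counting lemma B
lemma countB (M n : ℕ) (k1 k2 : Fin M) (hk : k1 ≠ k2) (i j : Fin n) :
    (Finset.univ.filter (fun g : Fin M ↪ Fin n => g k1 = i ∧ g k2 = j)).card ≤ n ^ (M - 2) := by
  classical
  have hcard : Fintype.card {k : Fin M // k ≠ k1 ∧ k ≠ k2} = M - 2 := by
    rw [Fintype.card_subtype]
    have : Finset.univ.filter (fun k : Fin M => k ≠ k1 ∧ k ≠ k2) = ({k1, k2} : Finset (Fin M))ᶜ := by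
      ext k; simp [not_or]
    rw [this, Finset.card_compl, Finset.card_insert_of_notMem (by simp only [Finset.mem_singleton]; exact hk),
      Finset.card_singleton, Fintype.card_fin]
  calc (Finset.univ.filter (fun g : Fin M ↪ Fin n => g k1 = i ∧ g k2 = j)).card
      ≤ (Finset.univ : Finset ({k : Fin M // k ≠ k1 ∧ k ≠ k2} → Fin n)).card := by
        apply Finset.card_le_card_of_injOn (fun g => fun k => g k.1)
        · intro _ _; exact Finset.mem_univ _
        · intro g hg g' hg' h
          simp only [Finset.coe_filter, Set.mem_setOf_eq, Finset.mem_univ, true_and] at hg hg'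
          refine DFunLike.ext _ _ fun k => ?_
          by_cases h1 : k = k1
          · rw [h1, hg.1, hg'.1]
          · by_cases h2 : k = k2
            · rw [h2, hg.2, hg'.2]
            · simpa using congrFun h ⟨k, h1, h2⟩
    _ = n ^ (M - 2) := by
        rw [Finset.card_univ, Fintype.card_fun, hcard, Fintype.card_fin]

lemma countA (M n : ℕ) (i j : Fin n) (hij : i ≠ j) :
    (Finset.univ.filter (fun g : Fin M ↪ Fin n => (∃ k, g k = i) ∧ (∃ k, g k = j))).card
      ≤ M * (M - 1) * n ^ (M - 2) := by
  classical
  have hsub : (Finset.univ.filter (fun g : Fin M ↪ Fin n => (∃ k, g k = i) ∧ (∃ k, g k = j)))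
      ⊆ (Finset.univ : Finset (Fin M)).offDiag.biUnion
        (fun kk => Finset.univ.filter (fun g : Fin M ↪ Fin n => g kk.1 = i ∧ g kk.2 = j)) := by
    intro g hg
    simp only [Finset.mem_filter, Finset.mem_univ, true_and] at hg
    obtain ⟨⟨k1, h1⟩, ⟨k2, h2⟩⟩ := hg
    refine Finset.mem_biUnion.2 ⟨(k1, k2), ?_, ?_⟩
    · simp only [Finset.mem_offDiag, Finset.mem_univ, true_and]
      rintro rfl; exact hij (h1 ▸ h2 ▸ rfl)
    · simp [h1, h2]
  calc _ ≤ _ := Finset.card_le_card hsub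
    _ ≤ ∑ kk ∈ (Finset.univ : Finset (Fin M)).offDiag,
          (Finset.univ.filter (fun g : Fin M ↪ Fin n => g kk.1 = i ∧ g kk.2 = j)).card :=
        Finset.card_biUnion_le
    _ ≤ ∑ _kk ∈ (Finset.univ : Finset (Fin M)).offDiag, n ^ (M - 2) := by
        apply Finset.sum_le_sum
        intro kk hkk
        exact countB M n kk.1 kk.2 (Finset.mem_offDiag.1 hkk).2.2 i j
    _ = M * (M - 1) * n ^ (M - 2) := by
        rw [Finset.sum_const, smul_eq_mul, Finset.offDiag_card, Finset.card_univ,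
          Fintype.card_fin, Nat.mul_sub_one]

lemma deltaBound (n M : ℕ) (ZX ZY : Fin n → ℝ)
    (hZX : ∀ k, ZX k = 0 ∨ ZX k = 1) (hZY : ∀ k, ZY k = 0 ∨ ZY k = 1)
    (i j : Fin n) (hij : i ≠ j) (hXY : ∀ k, k ≠ i → ZX k = ZY k) :
    |(∑ g : Fin M ↪ Fin n, ((∏ k, Function.update ZX j 1 (g k)) - ∏ k, Function.update ZX j 0 (g k)))
      - ∑ g : Fin M ↪ Fin n, ((∏ k, Function.update ZY j 1 (g k)) - ∏ k, Function.update ZY j 0 (g k))|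
      ≤ ((M * (M - 1) * n ^ (M - 2) : ℕ) : ℝ) := by
  classical
  have hD01 : ∀ (Z : Fin n → ℝ), (∀ k, Z k = 0 ∨ Z k = 1) → ∀ g : Fin M ↪ Fin n,
      0 ≤ (∏ k, Function.update Z j 1 (g k)) - ∏ k, Function.update Z j 0 (g k) ∧
      (∏ k, Function.update Z j 1 (g k)) - ∏ k, Function.update Z j 0 (g k) ≤ 1 := by
    intro Z hZ g
    have h01 : ∀ (b : ℝ), b = 0 ∨ b = 1 → 0 ≤ b ∧ b ≤ 1 := by rintro b (rfl | rfl) <;> norm_num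
    have hf : ∀ (b : ℝ), (b = 0 ∨ b = 1) → ∀ k,
        0 ≤ Function.update Z j b (g k) ∧ Function.update Z j b (g k) ≤ 1 := by
      intro b hb k
      by_cases h : g k = j
      · rw [h, Function.update_self]; exact h01 b hb
      · rw [Function.update_of_ne h]; exact h01 _ (hZ _)
    have hmono : ∀ k, Function.update Z j 0 (g k) ≤ Function.update Z j 1 (g k) := by
      intro k
      by_cases h : g k = j
      · rw [h]; simp
      · rw [Function.update_of_ne h, Function.update_of_ne h]
    have hP1 : (∏ k, Function.update Z j 1 (g k)) ≤ 1 :=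
      Finset.prod_le_one (fun k _ => (hf 1 (Or.inr rfl) k).1) (fun k _ => (hf 1 (Or.inr rfl) k).2)
    have hP0 : 0 ≤ ∏ k, Function.update Z j 0 (g k) :=
      Finset.prod_nonneg (fun k _ => (hf 0 (Or.inl rfl) k).1)
    have hle : (∏ k, Function.update Z j 0 (g k)) ≤ ∏ k, Function.update Z j 1 (g k) :=
      Finset.prod_le_prod (fun k _ => (hf 0 (Or.inl rfl) k).1) (fun k _ => hmono k)
    exact ⟨by linarith, by linarith⟩
  have hP : ∀ g : Fin M ↪ Fin n, ¬((∃ k, g k = i) ∧ (∃ k, g k = j)) →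
      ((∏ k, Function.update ZX j 1 (g k)) - ∏ k, Function.update ZX j 0 (g k))
      = ((∏ k, Function.update ZY j 1 (g k)) - ∏ k, Function.update ZY j 0 (g k)) := by
    intro g hg
    rw [not_and_or] at hg
    rcases hg with hg | hg
    · push_neg at hg
      have hb : ∀ (b : ℝ) k, Function.update ZX j b (g k) = Function.update ZY j b (g k) := by
        intro b k
        by_cases h : g k = j
        · rw [h]; simp
        · rw [Function.update_of_ne h, Function.update_of_ne h]; exact hXY _ (hg k)
      rw [Finset.prod_congr rfl (fun k _ => hb 1 k), Finset.prod_congr rfl (fun k _ => hb 0 k)]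
    · push_neg at hg
      have hz : ∀ (Z : Fin n → ℝ) (b : ℝ) (k : Fin M), Function.update Z j b (g k) = Z (g k) :=
        fun Z b k => Function.update_of_ne (hg k) _ _
      simp only [hz, sub_self]
  set P : (Fin M ↪ Fin n) → Prop := fun g => (∃ k, g k = i) ∧ (∃ k, g k = j) with hPdef
  rw [← Finset.sum_sub_distrib]
  rw [← Finset.sum_filter_of_ne (p := P)
    (fun g _ hne => by by_contra hc; exact hne (sub_eq_zero.2 (hP g hc)))]
  calc |∑ g ∈ Finset.univ.filter P,
        (((∏ k, Function.update ZX j 1 (g k)) - ∏ k, Function.update ZX j 0 (g k))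
        - ((∏ k, Function.update ZY j 1 (g k)) - ∏ k, Function.update ZY j 0 (g k)))|
      ≤ ∑ g ∈ Finset.univ.filter P,
        |(((∏ k, Function.update ZX j 1 (g k)) - ∏ k, Function.update ZX j 0 (g k))
        - ((∏ k, Function.update ZY j 1 (g k)) - ∏ k, Function.update ZY j 0 (g k)))| :=
        Finset.abs_sum_le_sum_abs _ _
    _ ≤ ∑ _g ∈ Finset.univ.filter P, (1 : ℝ) := by
        apply Finset.sum_le_sum
        intro g _
        obtain ⟨hx0, hx1⟩ := hD01 ZX hZX g
        obtain ⟨hy0, hy1⟩ := hD01 ZY hZY g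
        rw [abs_sub_le_iff]
        constructor <;> linarith
    _ = ((Finset.univ.filter P).card : ℝ) := by simp
    _ ≤ ((M * (M - 1) * n ^ (M - 2) : ℕ) : ℝ) := by
        exact_mod_cast countA M n i j hij

/-- The per-coordinate formula for the discrete derivative of `scf`. -/
lemma dder_scf_eq (n l : ℕ) (p : ℝ) (m : Fin l → ℕ) (α : Fin l → ℝ)
    (Z : Fin n → ℝ) (j : Fin n) :
    dder n (scf n l p m α) Z j =
      ((∑ q, (α q / (n : ℝ) ^ (m q - 1)) *
        ∑ g : Fin (m q) ↪ Fin n,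
          ((∏ k, Function.update Z j 1 (g k)) - ∏ k, Function.update Z j 0 (g k)))
        + Real.log (p / (1 - p))) / 2 := by
  classical
  have habs : ∀ b : ℝ, (∑ x, |Function.update Z j b x|) = |b| + ∑ x ∈ Finset.univ \ {j}, |Z x| := by
    intro b
    have h1 : (fun x => |Function.update Z j b x|) = Function.update (fun x => |Z x|) j |b| := by
      funext x
      by_cases hx : x = j
      · subst hx; simp
      · rw [Function.update_of_ne hx, Function.update_of_ne hx]
    rw [h1]
    exact Finset.sum_update_of_mem (Finset.mem_univ j) (fun x => |Z x|) |b|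
  simp only [dder, scf, habs 1, habs 0, abs_one, abs_zero, Finset.sum_sub_distrib, mul_sub]
  ring

theorem stmt3 (n l : ℕ) (p : ℝ) (hp : p ∈ Set.Ioo (0:ℝ) 1)
    (m : Fin l → ℕ) (hm : ∀ q, 2 ≤ m q) (hminj : Function.Injective m)
    (α : Fin l → ℝ) (X Y : Fin n → Bool) (i : Fin n)
    (hi : X i ≠ Y i) (hXY : ∀ k, k ≠ i → X k = Y k) (j : Fin n) :
    |dder n (scf n l p m α) (boolToR n X) j - dder n (scf n l p m α) (boolToR n Y) j| ≤
      (1 / (2 * (n : ℝ))) * ∑ q, |α q| * (m q : ℝ) * ((m q : ℝ) - 1) := by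
  classical
  have hn : (0:ℝ) < n := by exact_mod_cast i.pos
  have hne : (n:ℝ) ≠ 0 := ne_of_gt hn
  have hRHS0 : 0 ≤ (1 / (2 * (n:ℝ))) * ∑ q, |α q| * (m q : ℝ) * ((m q : ℝ) - 1) := by
    apply mul_nonneg (by positivity)
    apply Finset.sum_nonneg
    intro q _
    have h2 : (2:ℝ) ≤ m q := by exact_mod_cast hm q
    exact mul_nonneg (mul_nonneg (abs_nonneg _) (by positivity)) (by linarith)
  by_cases hji : j = i
  · have hupd : ∀ b : ℝ, Function.update (boolToR n X) j b = Function.update (boolToR n Y) j b := by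
      intro b; funext k
      by_cases hk : k = j
      · subst hk; simp
      · rw [Function.update_of_ne hk, Function.update_of_ne hk]
        have : X k = Y k := hXY k (by rw [hji] at hk; exact hk)
        simp [boolToR, this]
    rw [dder, dder, hupd 1, hupd 0, sub_self, abs_zero]
    exact hRHS0
  · have hij : i ≠ j := fun h => hji h.symm
    have hZX : ∀ k, boolToR n X k = 0 ∨ boolToR n X k = 1 := by
      intro k; cases hx : X k <;> simp [boolToR, hx]
    have hZY : ∀ k, boolToR n Y k = 0 ∨ boolToR n Y k = 1 := by
      intro k; cases hx : Y k <;> simp [boolToR, hx]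
    have hZXY : ∀ k, k ≠ i → boolToR n X k = boolToR n Y k := by
      intro k hk; simp [boolToR, hXY k hk]
    rw [dder_scf_eq, dder_scf_eq]
    set ΔX : Fin l → ℝ := fun q => ∑ g : Fin (m q) ↪ Fin n,
      ((∏ k, Function.update (boolToR n X) j 1 (g k)) -
        ∏ k, Function.update (boolToR n X) j 0 (g k)) with hΔX
    set ΔY : Fin l → ℝ := fun q => ∑ g : Fin (m q) ↪ Fin n,
      ((∏ k, Function.update (boolToR n Y) j 1 (g k)) -
        ∏ k, Function.update (boolToR n Y) j 0 (g k)) with hΔY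
    have hmain : |∑ q, ((α q / (n:ℝ) ^ (m q - 1)) * ΔX q - (α q / (n:ℝ) ^ (m q - 1)) * ΔY q)|
        ≤ (1 / (n:ℝ)) * ∑ q, |α q| * (m q : ℝ) * ((m q : ℝ) - 1) := by
      calc |∑ q, ((α q / (n:ℝ) ^ (m q - 1)) * ΔX q - (α q / (n:ℝ) ^ (m q - 1)) * ΔY q)|
          ≤ ∑ q, |(α q / (n:ℝ) ^ (m q - 1)) * ΔX q - (α q / (n:ℝ) ^ (m q - 1)) * ΔY q| :=
            Finset.abs_sum_le_sum_abs _ _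
        _ ≤ ∑ q, (1 / (n:ℝ)) * (|α q| * (m q : ℝ) * ((m q : ℝ) - 1)) := by
            apply Finset.sum_le_sum
            intro q _
            rw [← mul_sub, abs_mul]
            have hpow : (0:ℝ) < (n:ℝ) ^ (m q - 1) := by positivity
            have hpow2 : (0:ℝ) < (n:ℝ) ^ (m q - 2) := by positivity
            have hc : |α q / (n:ℝ) ^ (m q - 1)| = |α q| / (n:ℝ) ^ (m q - 1) := by
              rw [abs_div, abs_of_pos hpow]
            have hdb := deltaBound n (m q) (boolToR n X) (boolToR n Y) hZX hZY i j hij hZXY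
            have hcast : ((m q * (m q - 1) * n ^ (m q - 2) : ℕ) : ℝ)
                = (m q : ℝ) * ((m q : ℝ) - 1) * (n:ℝ) ^ (m q - 2) := by
              have h1 : 1 ≤ m q := le_trans one_le_two (hm q)
              push_cast [Nat.cast_sub h1]
              ring
            rw [hcast] at hdb
            calc |α q / (n:ℝ) ^ (m q - 1)| * |ΔX q - ΔY q|
                ≤ |α q / (n:ℝ) ^ (m q - 1)| * ((m q : ℝ) * ((m q : ℝ) - 1) * (n:ℝ) ^ (m q - 2)) :=
                  mul_le_mul_of_nonneg_left hdb (abs_nonneg _)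
              _ = (1 / (n:ℝ)) * (|α q| * (m q : ℝ) * ((m q : ℝ) - 1)) := by
                  rw [hc]
                  have hexp : (n:ℝ) ^ (m q - 1) = (n:ℝ) ^ (m q - 2) * n := by
                    rw [← pow_succ]
                    congr 1
                    have := hm q
                    omega
                  rw [hexp]
                  field_simp
        _ = (1 / (n:ℝ)) * ∑ q, |α q| * (m q : ℝ) * ((m q : ℝ) - 1) := by
            rw [Finset.mul_sum]
    calc |((∑ q, (α q / (n:ℝ) ^ (m q - 1)) * ΔX q) + Real.log (p / (1 - p))) / 2
          - ((∑ q, (α q / (n:ℝ) ^ (m q - 1)) * ΔY q) + Real.log (p / (1 - p))) / 2|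
        = |∑ q, ((α q / (n:ℝ) ^ (m q - 1)) * ΔX q - (α q / (n:ℝ) ^ (m q - 1)) * ΔY q)| / 2 := by
          rw [show ((∑ q, (α q / (n:ℝ) ^ (m q - 1)) * ΔX q) + Real.log (p / (1 - p))) / 2
              - ((∑ q, (α q / (n:ℝ) ^ (m q - 1)) * ΔY q) + Real.log (p / (1 - p))) / 2
              = (∑ q, ((α q / (n:ℝ) ^ (m q - 1)) * ΔX q - (α q / (n:ℝ) ^ (m q - 1)) * ΔY q)) / 2 by
            rw [Finset.sum_sub_distrib]; ring]
          rw [abs_div, abs_two]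
      _ ≤ ((1 / (n:ℝ)) * ∑ q, |α q| * (m q : ℝ) * ((m q : ℝ) - 1)) / 2 := by linarith
      _ = (1 / (2 * (n:ℝ))) * ∑ q, |α q| * (m q : ℝ) * ((m q : ℝ) - 1) := by ring

end
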